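/- arXiv:2011.14382 — 5 statements merged into one kernel-verified Lean document; each statement's English description precedes it below -/
import Mathlib

section
/- Fix 0 < δ < 1 and consider two agents with unit sizes, single-resource budget B = 2, demands θ_1 = 1 + δ and θ_2 = 1 − δ, and filling-ratio utilities u(x, θ) = min(x/θ, 1). If (x_1, x_2) with x_1, x_2 ≥ 0 and x_1 + x_2 ≤ 2 is envy-free and Pareto-efficient, then x_1 = 1 + δ and x_2 = 1 − δ. -/
/-- Filling-ratio utility `min(x/θ, 1)`. -/
noncomputable def fillRatio (x θ : ℝ) : ℝ := min (x / θ) 1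

/-- With two unit-size agents, budget `B = 2`, demands `θ₁ = 1 + δ`, `θ₂ = 1 - δ` and
filling-ratio utilities, any feasible allocation that is envy-free and Pareto-efficient
must be `(1 + δ, 1 - δ)`. -/
theorem fair_allocation_high_low (δ : ℝ) (hδ0 : 0 < δ) (hδ1 : δ < 1)
    (x₁ x₂ : ℝ) (hx₁ : 0 ≤ x₁) (hx₂ : 0 ≤ x₂) (hbudget : x₁ + x₂ ≤ 2)
    (hEF : fillRatio x₂ (1 + δ) ≤ fillRatio x₁ (1 + δ) ∧
           fillRatio x₁ (1 - δ) ≤ fillRatio x₂ (1 - δ))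
    (hPE : ¬ ∃ y₁ y₂ : ℝ, 0 ≤ y₁ ∧ 0 ≤ y₂ ∧ y₁ + y₂ ≤ 2 ∧
        fillRatio x₁ (1 + δ) ≤ fillRatio y₁ (1 + δ) ∧
        fillRatio x₂ (1 - δ) ≤ fillRatio y₂ (1 - δ) ∧
        (fillRatio x₁ (1 + δ) < fillRatio y₁ (1 + δ) ∨
         fillRatio x₂ (1 - δ) < fillRatio y₂ (1 - δ))) :
    x₁ = 1 + δ ∧ x₂ = 1 - δ := by
  have h1 : (0:ℝ) < 1 + δ := by linarith
  have h2 : (0:ℝ) < 1 - δ := by linarith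
  have hy1 : fillRatio (1 + δ) (1 + δ) = 1 := by
    simp [fillRatio, div_self h1.ne']
  have hy2 : fillRatio (1 - δ) (1 - δ) = 1 := by
    simp [fillRatio, div_self h2.ne']
  have hle1 : fillRatio x₁ (1 + δ) ≤ 1 := min_le_right _ _
  have hle2 : fillRatio x₂ (1 - δ) ≤ 1 := min_le_right _ _
  have key : fillRatio x₁ (1 + δ) = 1 ∧ fillRatio x₂ (1 - δ) = 1 := by
    by_contra h
    apply hPE
    refine ⟨1 + δ, 1 - δ, by linarith, by linarith, by linarith, ?_, ?_, ?_⟩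
    · rw [hy1]; exact hle1
    · rw [hy2]; exact hle2
    · rw [hy1, hy2]
      rcases not_and_or.mp h with h' | h'
      · exact Or.inl (lt_of_le_of_ne hle1 h')
      · exact Or.inr (lt_of_le_of_ne hle2 h')
  have k1 : 1 + δ ≤ x₁ := by
    have := (one_le_div h1).mp (min_eq_right_iff.mp key.1)
    linarith
  have k2 : 1 - δ ≤ x₂ := by
    have := (one_le_div h2).mp (min_eq_right_iff.mp key.2)
    linarith
  constructor <;> linarith
end

section
/- Fix 0 < δ < 1 and consider two agents with unit sizes, single-resource budget B = 2, and filling-ratio utilities u(x, θ) = min(x/θ, 1). There do not exist real numbers x_1 ≥ 0 and x_2, x_2' ≥ 0 with x_1 + x_2 ≤ 2 and x_1 + x_2' ≤ 2 such that simultaneously: (a) the allocation (x_1, x_2) is envy-free and Pareto-efficient for the demand profile (θ_1, θ_2) = (1 + δ, 1 + δ), and (b) the allocation (x_1, x_2') is envy-free and Pareto-efficient for the demand profile (θ_1, θ_2) = (1 + δ, 1 − δ). Consequently, no online allocation rule that must fix agent 1's allocation after observing only θ_1 = 1 + δ can guarantee ex-post envy-freeness and Pareto-efficiency on both demand realizations.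 -/
/-- Envy-freeness of a two-agent allocation `(x₁, x₂)` for demands `(θ₁, θ₂)`
with filling-ratio utilities. -/
def EnvyFree2 (x₁ x₂ θ₁ θ₂ : ℝ) : Prop :=
  fillRatio x₂ θ₁ ≤ fillRatio x₁ θ₁ ∧ fillRatio x₁ θ₂ ≤ fillRatio x₂ θ₂

/-- Pareto-efficiency of a two-agent allocation `(x₁, x₂)` for demands `(θ₁, θ₂)`
with filling-ratio utilities, unit sizes and budget `2`. -/
def ParetoEfficient2 (x₁ x₂ θ₁ θ₂ : ℝ) : Prop :=
  ¬ ∃ y₁ y₂ : ℝ, 0 ≤ y₁ ∧ 0 ≤ y₂ ∧ y₁ + y₂ ≤ 2 ∧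
      fillRatio x₁ θ₁ ≤ fillRatio y₁ θ₁ ∧
      fillRatio x₂ θ₂ ≤ fillRatio y₂ θ₂ ∧
      (fillRatio x₁ θ₁ < fillRatio y₁ θ₁ ∨ fillRatio x₂ θ₂ < fillRatio y₂ θ₂)

/-- With two unit-size agents, budget `B = 2` and filling-ratio utilities, there is no
allocation `x₁` for the first agent (of demand `1 + δ`) that can be completed to an
envy-free and Pareto-efficient allocation both when the second agent's demand turns
out to be `1 + δ` and when it turns out to be `1 - δ`.  Hence no online algorithm can
guarantee ex-post envy-freeness and Pareto-efficiency on both realizations. -/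
theorem no_online_fair_allocation (δ : ℝ) (hδ0 : 0 < δ) (hδ1 : δ < 1) :
    ¬ ∃ (x₁ x₂ x₂' : ℝ), 0 ≤ x₁ ∧ 0 ≤ x₂ ∧ 0 ≤ x₂' ∧
        x₁ + x₂ ≤ 2 ∧ x₁ + x₂' ≤ 2 ∧
        EnvyFree2 x₁ x₂ (1 + δ) (1 + δ) ∧ ParetoEfficient2 x₁ x₂ (1 + δ) (1 + δ) ∧
        EnvyFree2 x₁ x₂' (1 + δ) (1 - δ) ∧ ParetoEfficient2 x₁ x₂' (1 + δ) (1 - δ) := by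
  rintro ⟨x₁, x₂, x₂', hx₁, hx₂, hx₂', hsA, hsB, ⟨_, hEFA⟩, _, _, hPB⟩
  have hθ : (0:ℝ) < 1 + δ := by linarith
  have hθ' : (0:ℝ) < 1 - δ := by linarith
  -- Step 1: Pareto efficiency on realization (1+δ, 1−δ) forces fillRatio x₁ (1+δ) = 1.
  have hfill1 : fillRatio x₁ (1 + δ) = 1 := by
    by_contra hne
    have hlt : fillRatio x₁ (1 + δ) < 1 := lt_of_le_of_ne (min_le_right _ _) hne
    apply hPB
    refine ⟨1 + δ, min x₂' (1 - δ), le_of_lt hθ, le_min hx₂' (le_of_lt hθ'), ?_, ?_, ?_, ?_⟩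
    · have : min x₂' (1 - δ) ≤ 1 - δ := min_le_right _ _
      linarith
    · have : fillRatio (1 + δ) (1 + δ) = 1 := by
        simp [fillRatio, div_self (ne_of_gt hθ)]
      rw [this]; exact le_of_lt hlt
    · have : fillRatio (min x₂' (1 - δ)) (1 - δ) = fillRatio x₂' (1 - δ) := by
        unfold fillRatio
        rw [show min x₂' (1 - δ) / (1 - δ) = min (x₂' / (1 - δ)) ((1 - δ) / (1 - δ)) from
          (min_div_div_right (le_of_lt hθ') _ _).symm, div_self (ne_of_gt hθ'),
          min_assoc, min_self]
      rw [this]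
    · left
      have : fillRatio (1 + δ) (1 + δ) = 1 := by
        simp [fillRatio, div_self (ne_of_gt hθ)]
      rw [this]; exact hlt
  -- Step 2: hence x₁ ≥ 1 + δ.
  have hx₁ge : 1 + δ ≤ x₁ := by
    have h1 : (1:ℝ) ≤ x₁ / (1 + δ) := by
      by_contra h
      push_neg at h
      have : fillRatio x₁ (1 + δ) < 1 := by
        unfold fillRatio
        exact lt_of_le_of_lt (min_le_left _ _) h
      linarith [hfill1 ▸ this]
    calc 1 + δ = 1 * (1 + δ) := (one_mul _).symm
      _ ≤ (x₁ / (1 + δ)) * (1 + δ) := by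
          exact mul_le_mul_of_nonneg_right h1 (le_of_lt hθ)
      _ = x₁ := div_mul_cancel₀ _ (ne_of_gt hθ)
  -- Step 3: envy-freeness on realization (1+δ, 1+δ) then forces x₂ ≥ 1 + δ, too much.
  have hx₂ge : 1 + δ ≤ x₂ := by
    rw [hfill1] at hEFA
    have h1 : (1:ℝ) ≤ x₂ / (1 + δ) := by
      unfold fillRatio at hEFA
      exact le_trans hEFA (min_le_left _ _)
    calc 1 + δ = 1 * (1 + δ) := (one_mul _).symm
      _ ≤ (x₂ / (1 + δ)) * (1 + δ) := mul_le_mul_of_nonneg_right h1 (le_of_lt hθ)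
      _ = x₂ := div_mul_cancel₀ _ (ne_of_gt hθ)
  linarith
end

section
/- Let n ≥ 1 agents have demands θ_1,…,θ_n > 0 and sizes S_1,…,S_n > 0, let B > 0 be a single-resource budget, and let w_f ≥ 0 satisfy ∑_{i=1}^n S_i min(θ_i, w_f) = min(B, ∑_{i=1}^n S_i θ_i). Define the waterfilling allocation X_i = min(w_f, θ_i). Then X is feasible (∑_{i=1}^n S_i X_i ≤ B), each X_i > 0, and for every allocation Y with Y_i > 0 for all i and ∑_{i=1}^n S_i Y_i ≤ B, we have ∑_{i=1}^n S_i · log( min(Y_i/θ_i, 1) ) ≤ ∑_{i=1}^n S_i · log( min(X_i/θ_i, 1) ); that is, the waterfilling allocation maximizes the Eisenberg–Gale (log Nash Social Welfare) objective for filling-ratio utilities. -/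
/-- Per-agent supergradient inequality: for the concave function
`x ↦ log (min (x/θ) 1)`, the slope `1/wf` is a supergradient at `min wf θ`. -/
lemma waterfilling_key_ineq (θ wf y : ℝ) (hθ : 0 < θ) (hwf : 0 < wf) (hy : 0 < y) :
    Real.log (min (y / θ) 1) - Real.log (min (min wf θ / θ) 1) ≤ (y - min wf θ) / wf := by
  set u := min (y / θ) 1 with hu_def
  set v := min (min wf θ / θ) 1 with hv_def
  have hu : 0 < u := lt_min (div_pos hy hθ) one_pos
  have hv : 0 < v := lt_min (div_pos (lt_min hwf hθ) hθ) one_pos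
  have h1 : Real.log u - Real.log v ≤ u / v - 1 := by
    have := Real.log_le_sub_one_of_pos (div_pos hu hv)
    rwa [Real.log_div hu.ne' hv.ne'] at this
  have h2 : u / v - 1 ≤ (y - min wf θ) / wf := by
    rcases le_total wf θ with h | h
    · have hmin : min wf θ = wf := min_eq_left h
      have hv' : v = wf / θ := by
        rw [hv_def, hmin, min_eq_left (by rw [div_le_one hθ]; exact h)]
      have huθ : u * θ ≤ y := by
        have h3 : u ≤ y / θ := min_le_left _ _
        calc u * θ ≤ (y / θ) * θ := by nlinarith
          _ = y := by field_simp
      have heq : u / v - 1 = (u * θ - wf) / wf := by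
        rw [hv']; field_simp
      rw [heq, hmin]
      exact div_le_div_of_nonneg_right (by linarith) hwf.le
    · have hmin : min wf θ = θ := min_eq_right h
      have hv' : v = 1 := by
        rw [hv_def, hmin, div_self hθ.ne', min_self]
      rw [hv', hmin, div_one]
      rcases le_total θ y with h4 | h4
      · have hu' : u = 1 := min_eq_right (by rw [le_div_iff₀ hθ]; linarith)
        rw [hu']
        have : 0 ≤ (y - θ) / wf := div_nonneg (by linarith) hwf.le
        linarith
      · have hu' : u = y / θ := min_eq_left (by rw [div_le_one hθ]; linarith)
        rw [hu']
        rw [div_sub_one hθ.ne', div_le_div_iff₀ hθ hwf]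
        nlinarith
  linarith

/-- The waterfilling allocation `X i = min w_f (θ i)` associated to a waterfilling
threshold `w_f` is feasible, strictly positive, and maximizes the Eisenberg–Gale
(log Nash Social Welfare) objective `∑ i, S i * log (min (Y i / θ i) 1)` over all
strictly positive feasible allocations `Y`. -/
theorem waterfilling_maximizes_eisenberg_gale
    (n : ℕ) (θ S : Fin (n + 1) → ℝ)
    (hθ : ∀ i, 0 < θ i) (hS : ∀ i, 0 < S i)
    (B : ℝ) (hB : 0 < B)
    (wf : ℝ) (hwf : 0 ≤ wf)
    (hthresh : ∑ i, S i * min (θ i) wf = min B (∑ i, S i * θ i))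
    (X : Fin (n + 1) → ℝ) (hX : ∀ i, X i = min wf (θ i)) :
    (∑ i, S i * X i ≤ B) ∧ (∀ i, 0 < X i) ∧
      (∀ Y : Fin (n + 1) → ℝ, (∀ i, 0 < Y i) → ∑ i, S i * Y i ≤ B →
        ∑ i, S i * Real.log (min (Y i / θ i) 1) ≤
          ∑ i, S i * Real.log (min (X i / θ i) 1)) := by
  have hθsum : 0 < ∑ i, S i * θ i :=
    Finset.sum_pos (fun i _ => mul_pos (hS i) (hθ i)) ⟨0, Finset.mem_univ 0⟩
  have hwf' : 0 < wf := by
    by_contra h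
    push_neg at h
    have hwf0 : wf = 0 := le_antisymm h hwf
    have hz : ∑ i, S i * min (θ i) wf = 0 := by
      subst hwf0
      simp [min_eq_right (hθ _).le]
    rw [hz] at hthresh
    have hpos : 0 < min B (∑ i, S i * θ i) := lt_min hB hθsum
    linarith
  have hXsum : ∑ i, S i * X i = min B (∑ i, S i * θ i) := by
    rw [← hthresh]
    exact Finset.sum_congr rfl (fun i _ => by rw [hX i, min_comm])
  refine ⟨by rw [hXsum]; exact min_le_left _ _,
    fun i => by rw [hX i]; exact lt_min hwf' (hθ i), ?_⟩
  intro Y hY hYsum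
  rcases le_total B (∑ i, S i * θ i) with hc | hc
  · -- budget binding case: ∑ S X = B
    have hXB : ∑ i, S i * X i = B := by rw [hXsum, min_eq_left hc]
    have hsum : ∑ i, S i * (Real.log (min (Y i / θ i) 1) - Real.log (min (X i / θ i) 1))
        ≤ ∑ i, S i * ((Y i - X i) / wf) :=
      Finset.sum_le_sum fun i _ => mul_le_mul_of_nonneg_left
        (by rw [hX i]; exact waterfilling_key_ineq (θ i) wf (Y i) (hθ i) hwf' (hY i)) (hS i).le
    have hrhs : ∑ i, S i * ((Y i - X i) / wf)
        = (∑ i, S i * Y i - ∑ i, S i * X i) / wf := by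
      rw [← Finset.sum_sub_distrib, Finset.sum_div]
      exact Finset.sum_congr rfl (fun i _ => by ring)
    have hrhs0 : (∑ i, S i * Y i - ∑ i, S i * X i) / wf ≤ 0 := by
      apply div_nonpos_of_nonpos_of_nonneg _ hwf'.le
      rw [hXB]; linarith
    have hlhs : ∑ i, S i * (Real.log (min (Y i / θ i) 1) - Real.log (min (X i / θ i) 1))
        = ∑ i, S i * Real.log (min (Y i / θ i) 1)
          - ∑ i, S i * Real.log (min (X i / θ i) 1) := by
      rw [← Finset.sum_sub_distrib]
      exact Finset.sum_congr rfl (fun i _ => by ring)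
    rw [hlhs, hrhs] at hsum
    linarith
  · -- abundant budget case: X i = θ i, all utilities equal 1
    have hmin : ∑ i, S i * min (θ i) wf = ∑ i, S i * θ i := by
      rw [hthresh, min_eq_right hc]
    have hall : ∀ i ∈ Finset.univ, S i * min (θ i) wf = S i * θ i := by
      rw [← Finset.sum_eq_sum_iff_of_le
        (fun i _ => mul_le_mul_of_nonneg_left (min_le_left _ _) (hS i).le)]
      exact hmin
    have hXθ : ∀ i, X i = θ i := by
      intro i
      have h1 := hall i (Finset.mem_univ i)
      have h2 : min (θ i) wf = θ i := by
        have := mul_left_cancel₀ (hS i).ne' h1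
        exact this
      rw [hX i, min_comm, h2]
    have hR : ∑ i, S i * Real.log (min (X i / θ i) 1) = 0 := by
      apply Finset.sum_eq_zero
      intro i _
      rw [hXθ i, div_self (hθ i).ne', min_self, Real.log_one, mul_zero]
    rw [hR]
    apply Finset.sum_nonpos
    intro i _
    apply mul_nonpos_of_nonneg_of_nonpos (hS i).le
    apply Real.log_nonpos
    · exact le_min (div_nonneg (hY i).le (hθ i).le) zero_le_one
    · exact min_le_right _ _
end

section
/- Let n ≥ 1 agents have demands θ_1,…,θ_n > 0 and sizes S_1,…,S_n > 0 with S = ∑_{i=1}^n S_i, let B > 0 be a single-resource budget, let w_f ≥ 0 satisfy ∑_{i=1}^n S_i min(θ_i, w_f) = min(B, ∑_{i=1}^n S_i θ_i), and define the waterfilling allocation X_i = min(w_f, θ_i). Then X is proportional for the filling-ratio utilities: for every agent i, min(X_i/θ_i, 1) ≥ min( B/(S θ_i), 1 ). -/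
/-- The waterfilling allocation `X i = min w_f (θ i)` is proportional for the
filling-ratio utilities: every agent weakly prefers it to the equal share `B / S`
where `S = ∑ i, S i`. -/
theorem waterfilling_proportional
    (n : ℕ) (θ S : Fin (n + 1) → ℝ)
    (hθ : ∀ i, 0 < θ i) (hS : ∀ i, 0 < S i)
    (B : ℝ) (hB : 0 < B)
    (wf : ℝ) (hwf : 0 ≤ wf)
    (hthresh : ∑ i, S i * min (θ i) wf = min B (∑ i, S i * θ i))
    (X : Fin (n + 1) → ℝ) (hX : ∀ i, X i = min wf (θ i)) :
    ∀ i, min (B / ((∑ j, S j) * θ i)) 1 ≤ min (X i / θ i) 1 := by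
  intro i
  have hSpos : 0 < ∑ j, S j := Finset.sum_pos (fun j _ => hS j) ⟨i, Finset.mem_univ i⟩
  rcases le_or_gt (θ i) wf with h | h
  · have hx : X i / θ i = 1 := by rw [hX i, min_eq_right h, div_self (hθ i).ne']
    rw [hx]; simp
  · have hXi : X i = wf := by rw [hX i, min_eq_left h.le]
    have hlt : ∑ j, S j * min (θ j) wf < ∑ j, S j * θ j := by
      apply Finset.sum_lt_sum
      · intro j _; exact mul_le_mul_of_nonneg_left (min_le_left _ _) (hS j).le
      · refine ⟨i, Finset.mem_univ i, ?_⟩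
        rw [min_eq_right h.le]
        exact mul_lt_mul_of_pos_left h (hS i)
    have hminB : min B (∑ j, S j * θ j) = B := by
      rw [hthresh] at hlt
      rcases min_cases B (∑ j, S j * θ j) with ⟨h1, _⟩ | ⟨h1, _⟩
      · exact h1
      · rw [h1] at hlt; exact absurd hlt (lt_irrefl _)
    have hBle : B ≤ (∑ j, S j) * wf := by
      have hsum : ∑ j, S j * min (θ j) wf ≤ ∑ j, S j * wf :=
        Finset.sum_le_sum fun j _ => mul_le_mul_of_nonneg_left (min_le_right _ _) (hS j).le
      rw [hthresh, hminB] at hsum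
      calc B ≤ ∑ j, S j * wf := hsum
        _ = (∑ j, S j) * wf := by rw [Finset.sum_mul]
    have hkey : B / ((∑ j, S j) * θ i) ≤ wf / θ i := by
      rw [div_le_div_iff₀ (mul_pos hSpos (hθ i)) (hθ i)]
      nlinarith [hθ i, mul_le_mul_of_nonneg_right hBle (hθ i).le]
    calc min (B / ((∑ j, S j) * θ i)) 1 ≤ min (wf / θ i) 1 := min_le_min hkey le_rfl
      _ = min (X i / θ i) 1 := by rw [hXi]
end

section
/- Let n ≥ 1 agents have demands θ_1,…,θ_n > 0 and sizes S_1,…,S_n > 0, let B > 0 be a single-resource budget, let w_f ≥ 0 satisfy ∑_{i=1}^n S_i min(θ_i, w_f) = min(B, ∑_{i=1}^n S_i θ_i), and define the waterfilling allocation X_i = min(w_f, θ_i). Then X is Pareto-efficient for the filling-ratio utilities: there is no allocation Y with Y_i ≥ 0 for all i and ∑_{i=1}^n S_i Y_i ≤ B such that min(Y_i/θ_i, 1) ≥ min(X_i/θ_i, 1) for all i and min(Y_j/θ_j, 1) > min(X_j/θ_j, 1) for some j. -/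
/-- The waterfilling allocation `X i = min w_f (θ i)` is Pareto-efficient for the
filling-ratio utilities `u(x, θ) = min (x / θ) 1`. -/
theorem waterfilling_pareto_efficient
    (n : ℕ) (θ S : Fin (n + 1) → ℝ)
    (hθ : ∀ i, 0 < θ i) (hS : ∀ i, 0 < S i)
    (B : ℝ) (hB : 0 < B)
    (wf : ℝ) (hwf : 0 ≤ wf)
    (hthresh : ∑ i, S i * min (θ i) wf = min B (∑ i, S i * θ i))
    (X : Fin (n + 1) → ℝ) (hX : ∀ i, X i = min wf (θ i)) :
    ¬ ∃ Y : Fin (n + 1) → ℝ, (∀ i, 0 ≤ Y i) ∧ (∑ i, S i * Y i ≤ B) ∧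
        (∀ i, min (X i / θ i) 1 ≤ min (Y i / θ i) 1) ∧
        (∃ j, min (X j / θ j) 1 < min (Y j / θ j) 1) := by
  rintro ⟨Y, hY0, hYB, hdom, j, hj⟩
  have hXθ : ∀ i, X i ≤ θ i := fun i => (hX i) ▸ min_le_right _ _
  have hXu : ∀ i, min (X i / θ i) 1 = X i / θ i := by
    intro i
    exact min_eq_left ((div_le_one (hθ i)).mpr (hXθ i))
  have hXY : ∀ i, X i ≤ Y i := by
    intro i
    have h := (hdom i)
    rw [hXu i] at h
    have h2 : X i / θ i ≤ Y i / θ i := h.trans (min_le_left _ _)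
    exact (div_le_div_iff_of_pos_right (hθ i)).mp h2
  have hjlt : X j < Y j := by
    have h := hj
    rw [hXu j] at h
    have h2 : X j / θ j < Y j / θ j := lt_of_lt_of_le h (min_le_left _ _)
    exact (div_lt_div_iff_of_pos_right (hθ j)).mp h2
  have hjθ : X j < θ j := by
    have h := hj
    rw [hXu j] at h
    have : X j / θ j < 1 := lt_of_lt_of_le h (min_le_right _ _)
    exact (div_lt_one (hθ j)).mp this
  have hsumX : ∑ i, S i * X i = min B (∑ i, S i * θ i) := by
    rw [← hthresh]
    exact Finset.sum_congr rfl fun i _ => by rw [hX i, min_comm]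
  have hsumlt : ∑ i, S i * X i < ∑ i, S i * Y i := by
    apply Finset.sum_lt_sum (fun i _ => mul_le_mul_of_nonneg_left (hXY i) (hS i).le)
    exact ⟨j, Finset.mem_univ j, mul_lt_mul_of_pos_left hjlt (hS j)⟩
  rcases le_total B (∑ i, S i * θ i) with hc | hc
  · rw [min_eq_left hc] at hsumX
    linarith
  · rw [min_eq_right hc] at hsumX
    have hle : ∀ i ∈ Finset.univ, S i * X i ≤ S i * θ i :=
      fun i _ => mul_le_mul_of_nonneg_left (hXθ i) (hS i).le
    have := (Finset.sum_eq_sum_iff_of_le hle).mp hsumX j (Finset.mem_univ j)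
    have : X j = θ j := by
      have h := mul_left_cancel₀ (hS j).ne' this
      exact h.symm ▸ rfl
    linarith
end
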